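/- Let F be a linearly ordered type (or any type with decidable equality), and let A = (a₁, …, a_m) and S = (s₁, …, s_n) be lists over F with n ≥ m ≥ 1 such that every entry of A is an entry of S. Then there exist a permutation A' of A and a permutation S' of S such that, for each index j, either a'_j = a'_{j−1} (for j ≥ 2) or a'_j = s'_j, and a'₁ = s'₁. (If m < n one first pads A with n − m copies of some entry of S so both lists have length n.) -/

import Mathlib

private lemma ofFn_getElem_cast {α : Type*} (l : List α) {n : ℕ} (h : l.length = n) :
    List.ofFn (fun j : Fin n => l[(j : ℕ)]'(by omega)) = l := by
  subst h
  exact List.ofFn_getElem (xs := l)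

/-- From equal multisets of values, extract an index permutation. -/
private lemma exists_perm_comp {F : Type*} [DecidableEq F] {n : ℕ} (f g : Fin n → F)
    (h : Multiset.map f Finset.univ.val = Multiset.map g Finset.univ.val) :
    ∃ σ : Equiv.Perm (Fin n), ∀ j, f j = g (σ j) := by
  have hcard : ∀ c, Fintype.card {i // f i = c} = Fintype.card {i // g i = c} := by
    intro c
    have hc := congrArg (Multiset.count c) h
    rw [Multiset.count_map, Multiset.count_map] at hc
    rw [Fintype.card_subtype, Fintype.card_subtype, Finset.card, Finset.filter_val,
      Finset.card, Finset.filter_val]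
    simp only [eq_comm] at hc ⊢
    exact hc
  refine ⟨Equiv.ofFiberEquiv (fun c => Fintype.equivOfCardEq (hcard c)), fun j => ?_⟩
  exact (Equiv.ofFiberEquiv_map (fun c => Fintype.equivOfCardEq (hcard c)) j).symm

/-- Key combinatorial construction, on multisets / lists. -/
private lemma key (F : Type*) [DecidableEq F] :
    ∀ N (α β : Multiset F), Multiset.card α ≤ N → Multiset.card α = Multiset.card β →
      (∀ x ∈ α, x ∈ β) →
      ∃ A' S' : List F, (A' : Multiset F) = α ∧ (S' : Multiset F) = β ∧
        ∀ i (hA : i < A'.length) (hS : i < S'.length),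
          A'[i] = S'[i] ∨ (i ≠ 0 ∧ A'[i] = A'[i-1]'(by omega)) := by
  intro N
  induction N with
  | zero =>
    intro α β h0 _ _
    refine ⟨[], β.toList, ?_, β.coe_toList, ?_⟩
    · simpa using (Multiset.card_eq_zero.mp (by omega)).symm
    · intro i hA; simp at hA
  | succ N ih =>
    intro α β hN hc hmem
    rcases Nat.eq_zero_or_pos (Multiset.card α) with h0 | h0
    · refine ⟨[], β.toList, ?_, β.coe_toList, ?_⟩
      · simpa using (Multiset.card_eq_zero.mp h0).symm
      · intro i hA; simp at hA
    obtain ⟨x, hx⟩ := Multiset.card_pos_iff_exists_mem.mp h0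
    have hxβ : x ∈ β := hmem x hx
    set k := α.count x with hkdef
    have hk1 : 1 ≤ k := Multiset.one_le_count_iff_mem.mpr hx
    set B := α.filter (fun y => ¬ y = x) with hBdef
    have hsplit : α = Multiset.replicate k x + B := by
      conv_lhs => rw [← Multiset.filter_add_not (fun y => y = x) α]
      rw [Multiset.filter_eq']
    have hcardα : Multiset.card α = k + Multiset.card B := by
      conv_lhs => rw [hsplit]
      simp
    set T := β.erase x with hTdef
    have hTcard : Multiset.card T = Multiset.card β - 1 := by
      rw [hTdef, Multiset.card_erase_of_mem hxβ]; rfl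
    set D := B.dedup with hDdef
    have hDB : Multiset.card D ≤ Multiset.card B := Multiset.card_le_card (Multiset.dedup_le B)
    have hDT : D ≤ T := by
      rw [Multiset.le_iff_count]
      intro y
      rw [hDdef, Multiset.count_dedup]
      split_ifs with hy
      · obtain ⟨hyα, hyx⟩ := Multiset.mem_filter.mp (hBdef ▸ hy)
        rw [hTdef, Multiset.count_erase_of_ne hyx]
        exact Multiset.one_le_count_iff_mem.mpr (hmem y hyα)
      · exact Nat.zero_le _
    set c := Multiset.card B - Multiset.card D with hcdef
    set L := (T - D).toList with hLdef
    have hLlen : L.length = Multiset.card T - Multiset.card D := by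
      rw [hLdef, Multiset.length_toList, Multiset.card_sub hDT]
    have hcL : c ≤ L.length := by omega
    set T' := D + ((L.take c : List F) : Multiset F) with hT'def
    have htake : Multiset.card ((L.take c : List F) : Multiset F) = c := by
      rw [Multiset.coe_card, List.length_take]; omega
    have hT'T : T' ≤ T := by
      have h1 : ((L.take c : List F) : Multiset F) ≤ T - D := by
        have : ((L.take c : List F) : Multiset F) ≤ (L : Multiset F) :=
          (List.take_sublist c L).subperm
        rwa [hLdef, Multiset.coe_toList] at this
      calc T' ≤ D + (T - D) := add_le_add_right h1 D
        _ = T := add_tsub_cancel_of_le hDT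
    have hT'card : Multiset.card T' = Multiset.card B := by
      rw [hT'def, Multiset.card_add, htake]; omega
    set C := T - T' with hCdef
    have hCcard : Multiset.card C = k - 1 := by
      rw [hCdef, Multiset.card_sub hT'T]; omega
    have hCT' : C + T' = T := tsub_add_cancel_of_le hT'T
    have hmemB : ∀ y ∈ B, y ∈ T' := by
      intro y hy
      rw [hT'def]
      exact Multiset.mem_add.mpr (Or.inl (Multiset.mem_dedup.mpr hy))
    obtain ⟨B', T'', hB', hT'', hprop⟩ := ih B T' (by omega) hT'card.symm hmemB
    have hlenB' : B'.length = Multiset.card B := by rw [← Multiset.coe_card, hB']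
    have hlenT'' : T''.length = Multiset.card B := by rw [← Multiset.coe_card, hT'', hT'card]
    have hlenC : C.toList.length = k - 1 := by rw [Multiset.length_toList, hCcard]
    refine ⟨List.replicate k x ++ B', x :: (C.toList ++ T''), ?_, ?_, ?_⟩
    · rw [← Multiset.coe_add, hB', hsplit, Multiset.coe_replicate]
    · rw [show ((x :: (C.toList ++ T'') : List F) : Multiset F)
          = x ::ₘ ((C.toList ++ T'' : List F) : Multiset F) from (Multiset.cons_coe x _).symm,
        ← Multiset.coe_add, Multiset.coe_toList, hT'', hCT', hTdef, Multiset.cons_erase hxβ]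
    · intro i hA hS
      have hA' : i < k + B'.length := by simpa using hA
      have hklen : (x :: C.toList).length = k := by
        simp only [List.length_cons, hlenC]; omega
      by_cases hik : i < k
      · have hAi : (List.replicate k x ++ B')[i]'hA = x := by
          rw [List.getElem_append_left (by simpa using hik), List.getElem_replicate]
        rcases Nat.eq_zero_or_pos i with hi0 | hi0
        · subst hi0
          left
          rw [hAi]
          rfl
        · right
          refine ⟨by omega, ?_⟩
          rw [hAi, List.getElem_append_left (by simp; omega), List.getElem_replicate]
      · have hik' : k ≤ i := Nat.le_of_not_lt hik
        have hrep : (List.replicate k x).length ≤ i := by simpa using hik'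
        have hAi : (List.replicate k x ++ B')[i]'hA = B'[i - k]'(by omega) := by
          rw [List.getElem_append_right hrep]
          simp only [List.length_replicate]
        have hScons : (x :: (C.toList ++ T'') : List F) = (x :: C.toList) ++ T'' := by
          simp
        have hSlen : i < ((x :: C.toList) ++ T'').length := by rw [← hScons]; exact hS
        have hSi : (x :: (C.toList ++ T''))[i]'hS = T''[i - k]'(by
            simp only [List.length_append, hklen] at hSlen; omega) := by
          rw [List.getElem_of_eq hScons, List.getElem_append_right (by omega)]
          simp only [hklen]
        have hbound1 : i - k < B'.length := by omega
        have hbound2 : i - k < T''.length := by rw [hlenT'', ← hlenB']; omega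
        rcases hprop (i - k) hbound1 hbound2 with h | ⟨hne, h⟩
        · left
          rw [hAi, hSi, h]
        · right
          refine ⟨by omega, ?_⟩
          have hAi1 : (List.replicate k x ++ B')[i - 1]'(by omega)
              = B'[i - 1 - k]'(by omega) := by
            rw [List.getElem_append_right (by simp; omega)]
            simp only [List.length_replicate]
          have hidx : B'[i - 1 - k]'(by omega) = B'[i - k - 1]'(by omega) := by
            simp only [Nat.sub_right_comm]
          rw [hAi, hAi1, hidx, h]

theorem stmt16 (F : Type*) [DecidableEq F] (m n : ℕ) (hm : 1 ≤ m) (hmn : m ≤ n)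
    (a : Fin m → F) (s : Fin n → F)
    (hlookup : ∀ i : Fin m, ∃ k : Fin n, a i = s k) :
    ∃ (pad : Fin n) (a' s' : Fin n → F),
      (Multiset.map a' Finset.univ.val =
        Multiset.map a Finset.univ.val + Multiset.replicate (n - m) (s pad)) ∧
      (∃ σ : Equiv.Perm (Fin n), ∀ j, s' j = s (σ j)) ∧
      a' ⟨0, Nat.lt_of_lt_of_le hm hmn⟩ = s' ⟨0, Nat.lt_of_lt_of_le hm hmn⟩ ∧
      (∀ j : Fin n, 1 ≤ (j : ℕ) →
        a' j = a' ⟨(j : ℕ) - 1, Nat.lt_of_le_of_lt (Nat.sub_le _ _) j.isLt⟩ ∨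
        a' j = s' j) := by
  set pad : Fin n := ⟨0, Nat.lt_of_lt_of_le hm hmn⟩ with hpaddef
  set α : Multiset F := Multiset.map a Finset.univ.val + Multiset.replicate (n - m) (s pad)
    with hα
  set β : Multiset F := Multiset.map s Finset.univ.val with hβ
  have hA0 : ((List.ofFn a ++ List.replicate (n - m) (s pad) : List F) : Multiset F) = α := by
    rw [hα, ← Multiset.coe_add, Fin.univ_val_map, Multiset.coe_replicate]
  have hcardα : Multiset.card α = n := by
    rw [← hA0, Multiset.coe_card]
    simp
    omega
  have hcardβ : Multiset.card β = n := by simp [hβ]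
  have hmemαβ : ∀ x ∈ α, x ∈ β := by
    intro y hy
    rw [hα, Multiset.mem_add] at hy
    rcases hy with hy | hy
    · obtain ⟨i, _, rfl⟩ := Multiset.mem_map.mp hy
      obtain ⟨k, hk⟩ := hlookup i
      rw [hβ, hk]
      exact Multiset.mem_map.mpr ⟨k, Finset.mem_univ_val k, rfl⟩
    · rw [Multiset.eq_of_mem_replicate hy, hβ]
      exact Multiset.mem_map.mpr ⟨pad, Finset.mem_univ_val pad, rfl⟩
  obtain ⟨A', S', hA', hS', hprop⟩ := key F n α β (by omega) (by omega) hmemαβ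
  have hlA : A'.length = n := by rw [← Multiset.coe_card, hA', hcardα]
  have hlS : S'.length = n := by rw [← Multiset.coe_card, hS', hcardβ]
  refine ⟨pad, fun j => A'[(j : ℕ)]'(by rw [hlA]; exact j.isLt),
      fun j => S'[(j : ℕ)]'(by rw [hlS]; exact j.isLt), ?_, ?_, ?_, ?_⟩
  · rw [Fin.univ_val_map, ofFn_getElem_cast A' hlA, hA']
  · exact exists_perm_comp _ s (by rw [Fin.univ_val_map, ofFn_getElem_cast S' hlS, hS'])
  · rcases hprop 0 (by omega) (by omega) with h | ⟨h0, _⟩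
    · exact h
    · exact absurd rfl h0
  · intro j hj
    rcases hprop (j : ℕ) (by rw [hlA]; exact j.isLt) (by rw [hlS]; exact j.isLt)
      with h | ⟨_, h⟩
    · exact Or.inr h
    · exact Or.inl h
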